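/- arXiv:1608.05314 — 4 statements merged into one kernel-verified Lean document; each statement's English description precedes it below -/
import Mathlib

section
/- In any bicategory, a 2-cell ε : u ≫ f ⟶ 𝟙 a (where f : b ⟶ a and u : a ⟶ b) is the counit of an adjunction f ⊣ u (i.e. there exists a unit η : 𝟙 b ⟶ f ≫ u such that η and ε satisfy the triangle identities) if and only if the pair (u, ε) is an absolute right lifting of the identity 1-cell 𝟙 a through f. -/
open CategoryTheory Bicategory

/-- Given 1-cells `f : b ⟶ a` and `g : c ⟶ a` in a bicategory, a 1-cell `ℓ : c ⟶ b`
together with a 2-cell `lam : ℓ ≫ f ⟶ g` is an *absolute right lifting* of `g`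
through `f` if every 2-cell `χ : p ≫ f ⟶ q ≫ g` factors uniquely through `lam`. -/
def IsAbsoluteRightLifting {B : Type*} [Bicategory B] {a b c : B}
    (f : b ⟶ a) (g : c ⟶ a) (ℓ : c ⟶ b) (lam : ℓ ≫ f ⟶ g) : Prop :=
  ∀ (x : B) (p : x ⟶ b) (q : x ⟶ c) (χ : p ≫ f ⟶ q ≫ g),
    ∃! ζ : p ⟶ q ≫ ℓ, χ = ζ ▷ f ≫ (α_ q ℓ f).hom ≫ q ◁ lam

/-- A 2-cell `ε : u ≫ f ⟶ 𝟙 a` is the counit of an adjunction `f ⊣ u` (i.e. there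
is a unit `η` such that `η` and `ε` satisfy the triangle identities) if and only if
`(u, ε)` is an absolute right lifting of the identity `𝟙 a` through `f`. -/
theorem counit_iff_absolute_right_lifting {B : Type*} [Bicategory B] {a b : B}
    (f : b ⟶ a) (u : a ⟶ b) (eps : u ≫ f ⟶ 𝟙 a) :
    (∃ η : 𝟙 b ⟶ f ≫ u,
        leftZigzag η eps = (λ_ f).hom ≫ (ρ_ f).inv ∧
        rightZigzag η eps = (ρ_ u).hom ≫ (λ_ u).inv) ↔
    IsAbsoluteRightLifting f (𝟙 a) u eps := by
  constructor
  · rintro ⟨η, hl, hr⟩ x p q χ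
    refine ⟨𝟙 p ⊗≫ p ◁ η ⊗≫ χ ▷ u ⊗≫ 𝟙 (q ≫ u), ?_, ?_⟩
    · calc
        χ = 𝟙 _ ⊗≫ p ◁ leftZigzag η eps ⊗≫ χ ⊗≫ 𝟙 _ := by
          rw [hl]; bicategory
        _ = 𝟙 _ ⊗≫ p ◁ η ▷ f ⊗≫ ((p ≫ f) ◁ eps ≫ χ ▷ 𝟙 a) ⊗≫ 𝟙 _ := by
          rw [leftZigzag]; bicategory
        _ = 𝟙 _ ⊗≫ p ◁ η ▷ f ⊗≫ (χ ▷ (u ≫ f) ≫ (q ≫ 𝟙 a) ◁ eps) ⊗≫ 𝟙 _ := by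
          rw [whisker_exchange]
        _ = (𝟙 p ⊗≫ p ◁ η ⊗≫ χ ▷ u ⊗≫ 𝟙 (q ≫ u)) ▷ f ≫ (α_ q u f).hom ≫ q ◁ eps := by
          bicategory
    · rintro ζ rfl
      symm
      calc
        𝟙 p ⊗≫ p ◁ η ⊗≫ (ζ ▷ f ≫ (α_ q u f).hom ≫ q ◁ eps) ▷ u ⊗≫ 𝟙 (q ≫ u)
            = 𝟙 _ ⊗≫ (p ◁ η ≫ ζ ▷ (f ≫ u)) ⊗≫ q ◁ eps ▷ u ⊗≫ 𝟙 _ := by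
          bicategory
        _ = 𝟙 _ ⊗≫ ζ ⊗≫ q ◁ rightZigzag η eps ⊗≫ 𝟙 _ := by
          rw [whisker_exchange, rightZigzag]; bicategory
        _ = ζ := by
          rw [hr]; bicategory
  · intro h
    obtain ⟨η, hη, -⟩ := h b (𝟙 b) f ((λ_ f).hom ≫ (ρ_ f).inv)
    have hl : leftZigzag η eps = (λ_ f).hom ≫ (ρ_ f).inv := by
      rw [hη, leftZigzag]; bicategory
    refine ⟨η, hl, ?_⟩
    obtain ⟨ζ, -, hu⟩ := h a u (𝟙 a) (eps ≫ (λ_ (𝟙 a)).inv)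
    have h1 : (λ_ u).inv = ζ := by
      apply hu
      bicategory
    have h2 : (ρ_ u).inv ≫ rightZigzag η eps = ζ := by
      apply hu
      calc
        eps ≫ (λ_ (𝟙 a)).inv = 𝟙 _ ⊗≫ u ◁ leftZigzag η eps ⊗≫ eps ▷ 𝟙 a ⊗≫ 𝟙 _ := by
          rw [hl]; bicategory
        _ = 𝟙 _ ⊗≫ u ◁ η ▷ f ⊗≫ ((u ≫ f) ◁ eps ≫ eps ▷ 𝟙 a) ⊗≫ 𝟙 _ := by
          rw [leftZigzag]; bicategory
        _ = 𝟙 _ ⊗≫ u ◁ η ▷ f ⊗≫ (eps ▷ (u ≫ f) ≫ 𝟙 a ◁ eps) ⊗≫ 𝟙 _ := by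
          rw [whisker_exchange]
        _ = ((ρ_ u).inv ≫ rightZigzag η eps) ▷ f ≫ (α_ (𝟙 a) u f).hom ≫ 𝟙 a ◁ eps := by
          rw [rightZigzag]; bicategory
    rw [← h1] at h2
    rw [← h2, ← Category.assoc, Iso.hom_inv_id, Category.id_comp]
end

section
/- In a strict 2-category with a 2-terminal object T, a 1-cell t : T ⟶ A is a terminal element of A (i.e. the unique 1-cell !_A : A ⟶ T is left adjoint to t) if and only if t is representably terminal: for every object X and every 1-cell f : X ⟶ A there exists a unique 2-cell from f to !_X ≫ t, where !_X : X ⟶ T is the unique 1-cell. -/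
open CategoryTheory Bicategory

section Aux
variable {B : Type*} [Bicategory B] [Bicategory.Strict B] {T : B}

private lemma key_zigzag {A : B} {t : T ⟶ A} {bA : A ⟶ T} (adj : Bicategory.Adjunction bA t)
    {X : B} {f : X ⟶ A} {g : X ⟶ T} (φ : f ⟶ g ≫ t) :
    φ = (ρ_ f).inv ≫ f ◁ adj.unit ≫ (α_ f bA t).inv ≫
      ((φ ▷ bA ≫ (α_ g t bA).hom ≫ g ◁ adj.counit ≫ (ρ_ g).hom) ▷ t) := by
  symm
  calc (ρ_ f).inv ≫ f ◁ adj.unit ≫ (α_ f bA t).inv ≫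
      ((φ ▷ bA ≫ (α_ g t bA).hom ≫ g ◁ adj.counit ≫ (ρ_ g).hom) ▷ t)
      = 𝟙 _ ⊗≫ (f ◁ adj.unit ≫ φ ▷ (bA ≫ t)) ⊗≫ (g ◁ adj.counit) ▷ t ⊗≫ 𝟙 _ := by
        bicategory
    _ = φ ⊗≫ g ◁ (t ◁ adj.unit ⊗≫ adj.counit ▷ t) ⊗≫ 𝟙 _ := by
        rw [whisker_exchange]; bicategory
    _ = φ := by
        rw [show t ◁ adj.unit ⊗≫ adj.counit ▷ t = (ρ_ t).hom ≫ (λ_ t).inv from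
          adj.right_triangle]
        bicategory
end Aux

/-- In a strict 2-category with a 2-terminal object `T` (there is exactly one 1-cell
`bang X : X ⟶ T` from each object, and the only 2-cell from `bang X` to itself is
the identity), a 1-cell `t : T ⟶ A` is a terminal element of `A` (i.e. `bang A ⊣ t`)
if and only if `t` is representably terminal: for every `f : X ⟶ A` there is a
unique 2-cell `f ⟶ bang X ≫ t`. -/
theorem terminal_element_iff_representably_terminal
    {B : Type*} [Bicategory B] [Bicategory.Strict B]
    (T : B) (bang : ∀ X : B, X ⟶ T)
    (huniq : ∀ (X : B) (h : X ⟶ T), h = bang X)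
    (h2 : ∀ (X : B) (φ : bang X ⟶ bang X), φ = 𝟙 (bang X))
    {A : B} (t : T ⟶ A) :
    Nonempty (Bicategory.Adjunction (bang A) t) ↔
      ∀ (X : B) (f : X ⟶ A), Nonempty (Unique (f ⟶ bang X ≫ t)) := by
  have uniq2 : ∀ {X : B} (g h : X ⟶ T) (α β : g ⟶ h), α = β := by
    intro X g h α β
    obtain rfl : g = bang X := huniq X g
    obtain rfl : h = bang X := huniq X h
    rw [h2 X α, h2 X β]
  constructor
  · rintro ⟨adj⟩ X f
    refine ⟨⟨⟨(ρ_ f).inv ≫ f ◁ adj.unit ≫ (α_ f (bang A) t).inv ≫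
      ((eqToHom (congrArg (· ≫ t) (huniq X (f ≫ bang A)))) :
        (f ≫ bang A) ≫ t ⟶ bang X ≫ t)⟩, fun φ => ?_⟩⟩
    rw [key_zigzag adj φ]
    simp only [Category.assoc]
    congr 2
    rw [uniq2 _ _ (φ ▷ bang A ≫ (α_ (bang X) t (bang A)).hom ≫ bang X ◁ adj.counit ≫
        (ρ_ (bang X)).hom) (eqToHom (huniq X (f ≫ bang A)))]
    simp [eqToHom_map]
  · intro H
    have he : t ≫ bang A = 𝟙 T := (huniq T _).trans (huniq T (𝟙 T)).symm
    refine ⟨{ unit := (H A (𝟙 A)).some.default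
              counit := eqToHom he
              left_triangle := uniq2 _ _ _ _
              right_triangle := ?_ }⟩
    have e1 : t = t ≫ 𝟙 A := (Category.comp_id t).symm
    have e2 : (𝟙 T ≫ t : T ⟶ A) = bang T ≫ t := by rw [huniq T (𝟙 T)]
    have hu : ∀ α β : (t ⟶ bang T ≫ t), α = β := fun α β => by
      have := (H T t).some; exact Subsingleton.elim α β
    rw [← cancel_epi (eqToHom e1), ← cancel_mono (eqToHom e2)]
    simp only [Category.assoc]
    exact hu _ _
end

section
/- Right adjoints preserve limits, in the following 2-categorical form. In a strict 2-category, suppose given: adjunctions f ⊣ u (with f : b ⟶ a, unit η, counit ε) and f' ⊣ u' (with f' : b' ⟶ a', unit η', counit ε'); 1-cells Δa : a ⟶ a' and Δb : b ⟶ b' satisfying the strict equalities f ≫ Δa = Δb ≫ f' and u ≫ Δb = Δa ≫ u'; and suppose the units and counits are compatible, i.e. the whiskered 2-cells η ▷ Δb and Δb ◁ η' agree (as 2-cells Δb ⟶ Δb ≫ f' ≫ u' = f ≫ u ≫ Δb, via these equalities), and likewise ε ▷ Δa and Δa ◁ ε' agree. Then for any object x and 1-cell d : x ⟶ a', if a 1-cell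 r : x ⟶ a and 2-cell λ : r ≫ Δa ⟶ d form an absolute right lifting of d through Δa, the 1-cell r ≫ u : x ⟶ b together with the 2-cell (r ≫ u) ≫ Δb = r ≫ Δa ≫ u' ⟶ d ≫ u' given by λ ▷ u' forms an absolute right lifting of d ≫ u' through Δb. -/
open CategoryTheory Bicategory

namespace RAPL

section Transpose
variable {B : Type*} [Bicategory B] {a b : B} (f : b ⟶ a) (u : a ⟶ b)
  (η : 𝟙 b ⟶ f ≫ u) (ϵ : u ≫ f ⟶ 𝟙 a)

/-- Transpose a 2-cell `p ⟶ t ≫ u` to a 2-cell `p ≫ f ⟶ t` using the counit. -/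
def transR {x : B} {p : x ⟶ b} {t : x ⟶ a} (ζ : p ⟶ t ≫ u) : p ≫ f ⟶ t :=
  ζ ▷ f ≫ (α_ t u f).hom ≫ t ◁ ϵ ≫ (ρ_ t).hom

/-- Transpose a 2-cell `p ≫ f ⟶ t` to a 2-cell `p ⟶ t ≫ u` using the unit. -/
def transL {x : B} {p : x ⟶ b} {t : x ⟶ a} (χ : p ≫ f ⟶ t) : p ⟶ t ≫ u :=
  (ρ_ p).inv ≫ p ◁ η ≫ (α_ p f u).inv ≫ χ ▷ u

lemma transL_transR (hRt : rightZigzag η ϵ = (ρ_ u).hom ≫ (λ_ u).inv)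
    {x : B} {p : x ⟶ b} {t : x ⟶ a} (ζ : p ⟶ t ≫ u) :
    transL f u η (transR f u ϵ ζ) = ζ := by
  dsimp only [transL, transR]
  calc (ρ_ p).inv ≫ p ◁ η ≫ (α_ p f u).inv ≫ (ζ ▷ f ≫ (α_ t u f).hom ≫ t ◁ ϵ ≫ (ρ_ t).hom) ▷ u
      = 𝟙 _ ⊗≫ (p ◁ η ≫ ζ ▷ (f ≫ u)) ⊗≫ (t ◁ ϵ) ▷ u ⊗≫ 𝟙 _ := by bicategory
    _ = 𝟙 _ ⊗≫ (ζ ▷ 𝟙 b ≫ (t ≫ u) ◁ η) ⊗≫ (t ◁ ϵ) ▷ u ⊗≫ 𝟙 _ := by rw [whisker_exchange]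
    _ = ζ ⊗≫ t ◁ (rightZigzag η ϵ) ⊗≫ 𝟙 _ := by rw [rightZigzag]; bicategory
    _ = ζ := by rw [hRt]; bicategory

lemma transR_transL (hLt : leftZigzag η ϵ = (λ_ f).hom ≫ (ρ_ f).inv)
    {x : B} {p : x ⟶ b} {t : x ⟶ a} (χ : p ≫ f ⟶ t) :
    transR f u ϵ (transL f u η χ) = χ := by
  dsimp only [transL, transR]
  calc ((ρ_ p).inv ≫ p ◁ η ≫ (α_ p f u).inv ≫ χ ▷ u) ▷ f ≫ (α_ t u f).hom ≫ t ◁ ϵ ≫ (ρ_ t).hom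
      = 𝟙 _ ⊗≫ (p ◁ η) ▷ f ⊗≫ (χ ▷ (u ≫ f) ≫ t ◁ ϵ) ⊗≫ 𝟙 _ := by bicategory
    _ = 𝟙 _ ⊗≫ (p ◁ η) ▷ f ⊗≫ ((p ≫ f) ◁ ϵ ≫ χ ▷ 𝟙 a) ⊗≫ 𝟙 _ := by rw [← whisker_exchange]
    _ = 𝟙 _ ⊗≫ p ◁ (leftZigzag η ϵ) ⊗≫ χ ⊗≫ 𝟙 _ := by rw [leftZigzag]; bicategory
    _ = χ := by rw [hLt]; bicategory
lemma transR_natural {x : B} {p : x ⟶ b} {t t' : x ⟶ a} (ζ : p ⟶ t ≫ u) (ξ : t ⟶ t') :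
    transR f u ϵ (ζ ≫ ξ ▷ u) = transR f u ϵ ζ ≫ ξ := by
  dsimp only [transR]
  calc (ζ ≫ ξ ▷ u) ▷ f ≫ (α_ t' u f).hom ≫ t' ◁ ϵ ≫ (ρ_ t').hom
      = 𝟙 _ ⊗≫ ζ ▷ f ⊗≫ (ξ ▷ (u ≫ f) ≫ t' ◁ ϵ) ⊗≫ 𝟙 _ := by bicategory
    _ = 𝟙 _ ⊗≫ ζ ▷ f ⊗≫ (t ◁ ϵ ≫ ξ ▷ 𝟙 a) ⊗≫ 𝟙 _ := by rw [← whisker_exchange]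
    _ = (ζ ▷ f ≫ (α_ t u f).hom ≫ t ◁ ϵ ≫ (ρ_ t).hom) ≫ ξ := by bicategory

end Transpose

section StrictHelpers
variable {B : Type*} [Bicategory B] [Bicategory.Strict B]

lemma wr_congr {a b c : B} {p q : a ⟶ b} (ζ : p ⟶ q) {h h' : b ⟶ c} (e : h = h') :
    ζ ▷ h = eqToHom (by rw [e]) ≫ ζ ▷ h' ≫ eqToHom (by rw [e]) := by
  cases e; simp

lemma swr2 {w x y z : B} {p p' : w ⟶ x} (ζ : p ⟶ p') (g : x ⟶ y) (h : y ⟶ z) :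
    ζ ▷ g ▷ h = eqToHom (Bicategory.Strict.assoc p g h) ≫ ζ ▷ (g ≫ h) ≫
      eqToHom (Bicategory.Strict.assoc p' g h).symm := by
  simp [Bicategory.whiskerRight_comp, Strict.associator_eqToIso]

lemma swl2' {w x y z : B} (g : w ⟶ x) (h : x ⟶ y) {p p' : y ⟶ z} (ζ : p ⟶ p') :
    (g ≫ h) ◁ ζ = eqToHom (Bicategory.Strict.assoc g h p) ≫ g ◁ h ◁ ζ ≫
      eqToHom (Bicategory.Strict.assoc g h p').symm := by
  simp [Bicategory.comp_whiskerLeft, Strict.associator_eqToIso]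

lemma swr_id {w x : B} {p p' : w ⟶ x} (ζ : p ⟶ p') :
    ζ ▷ (𝟙 x) = eqToHom (Bicategory.Strict.comp_id p) ≫ ζ ≫ eqToHom (Bicategory.Strict.comp_id p').symm := by
  simp [Strict.rightUnitor_eqToIso]

end StrictHelpers

end RAPL


/-- Right adjoints preserve limits, 2-categorically: in a strict 2-category, given
adjunctions `f ⊣ u` and `f' ⊣ u'`, 1-cells `Δa : a ⟶ a'` and `Δb : b ⟶ b'` commuting
strictly with the left and with the right adjoints, whose units and counits are
compatible, if `(r, lam)` is an absolute right lifting of `d` through `Δa`, then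
`(r ≫ u, lam ▷ u')` is an absolute right lifting of `d ≫ u'` through `Δb`. -/
theorem right_adjoints_preserve_limits
    {B : Type*} [Bicategory B] [Bicategory.Strict B] {a a' b b' : B}
    (f : b ⟶ a) (u : a ⟶ b) (η : 𝟙 b ⟶ f ≫ u) (ϵ : u ≫ f ⟶ 𝟙 a)
    (hLt : leftZigzag η ϵ = (λ_ f).hom ≫ (ρ_ f).inv)
    (hRt : rightZigzag η ϵ = (ρ_ u).hom ≫ (λ_ u).inv)
    (f' : b' ⟶ a') (u' : a' ⟶ b') (η' : 𝟙 b' ⟶ f' ≫ u') (ϵ' : u' ≫ f' ⟶ 𝟙 a')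
    (hLt' : leftZigzag η' ϵ' = (λ_ f').hom ≫ (ρ_ f').inv)
    (hRt' : rightZigzag η' ϵ' = (ρ_ u').hom ≫ (λ_ u').inv)
    (Δa : a ⟶ a') (Δb : b ⟶ b')
    (hf : f ≫ Δa = Δb ≫ f') (hu : u ≫ Δb = Δa ≫ u')
    (hunit : η ▷ Δb ≫
        eqToHom (show (f ≫ u) ≫ Δb = Δb ≫ f' ≫ u' by
          rw [Category.assoc, hu, ← Category.assoc, hf, Category.assoc]) =
      eqToHom (show 𝟙 b ≫ Δb = Δb ≫ 𝟙 b' by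
          rw [Category.id_comp, Category.comp_id]) ≫ Δb ◁ η')
    (hcounit : eqToHom (show (u ≫ f) ≫ Δa = Δa ≫ u' ≫ f' by
          rw [Category.assoc, hf, ← Category.assoc, hu, Category.assoc]) ≫ Δa ◁ ϵ' =
      ϵ ▷ Δa ≫ eqToHom (show 𝟙 a ≫ Δa = Δa ≫ 𝟙 a' by
          rw [Category.id_comp, Category.comp_id]))
    (x : B) (d : x ⟶ a') (r : x ⟶ a) (lam : r ≫ Δa ⟶ d)
    (hlift : IsAbsoluteRightLifting Δa d r lam) :
    IsAbsoluteRightLifting Δb (d ≫ u') (r ≫ u)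
      (eqToHom (show (r ≫ u) ≫ Δb = (r ≫ Δa) ≫ u' by
          rw [Category.assoc, hu, ← Category.assoc]) ≫ lam ▷ u') := by
  intro y p q χ
  have h1 : (p ≫ f) ≫ Δa = (p ≫ Δb) ≫ f' := by
    rw [Category.assoc, hf, ← Category.assoc]
  have a2 : q ≫ r ≫ u = (q ≫ r) ≫ u := (Category.assoc q r u).symm
  have a3 : q ≫ d ≫ u' = (q ≫ d) ≫ u' := (Category.assoc q d u').symm
  -- compatibility of the counits, in a convenient rewriting form
  have hco : Δa ◁ ϵ' = eqToHom (show Δa ≫ u' ≫ f' = (u ≫ f) ≫ Δa from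
        (by rw [Category.assoc, hf, ← Category.assoc, hu, Category.assoc] :
          (u ≫ f) ≫ Δa = Δa ≫ u' ≫ f').symm) ≫
      ϵ ▷ Δa ≫ eqToHom (show 𝟙 a ≫ Δa = Δa ≫ 𝟙 a' by
        rw [Category.id_comp, Category.comp_id]) := by
    rw [← hcounit]; simp
  set T : (p ≫ Δb ⟶ q ≫ d ≫ u') → ((p ≫ f) ≫ Δa ⟶ q ≫ d) := fun θ =>
    eqToHom h1 ≫ RAPL.transR f' u' ϵ' (θ ≫ eqToHom a3) with hT
  have Tinj : ∀ θ θ' : p ≫ Δb ⟶ q ≫ d ≫ u', T θ = T θ' → θ = θ' := by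
    intro θ θ' h
    simp only [hT] at h
    rw [cancel_epi (eqToHom h1)] at h
    have h3 := congrArg (RAPL.transL f' u' η') h
    rw [RAPL.transL_transR _ _ _ _ hRt', RAPL.transL_transR _ _ _ _ hRt'] at h3
    exact (cancel_mono (eqToHom a3)).mp h3
  have key : ∀ ζ : p ⟶ q ≫ r ≫ u,
      T (ζ ▷ Δb ≫ (α_ q (r ≫ u) Δb).hom ≫
          q ◁ (eqToHom (show (r ≫ u) ≫ Δb = (r ≫ Δa) ≫ u' by
            rw [Category.assoc, hu, ← Category.assoc]) ≫ lam ▷ u')) =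
        (RAPL.transR f u ϵ (ζ ≫ eqToHom a2)) ▷ Δa ≫ (α_ q r Δa).hom ≫ q ◁ lam := by
    intro ζ
    have E5 : (q ≫ r ≫ u) ≫ Δb = (q ≫ r ≫ Δa) ≫ u' := by
      simp only [Category.assoc, hu]
    have claim0 : (ζ ▷ Δb ≫ (α_ q (r ≫ u) Δb).hom ≫
          q ◁ (eqToHom (show (r ≫ u) ≫ Δb = (r ≫ Δa) ≫ u' by
            rw [Category.assoc, hu, ← Category.assoc]) ≫ lam ▷ u')) ≫ eqToHom a3 =
        (ζ ▷ Δb ≫ eqToHom E5) ≫ (q ◁ lam) ▷ u' := by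
      simp only [Strict.associator_eqToIso, Strict.leftUnitor_eqToIso,
        Strict.rightUnitor_eqToIso, eqToIso.hom, eqToIso.inv, whiskerLeft_eqToHom,
        eqToHom_whiskerRight, comp_whiskerRight, Bicategory.whiskerLeft_comp,
        Bicategory.comp_whiskerLeft, whisker_assoc, Category.assoc, eqToHom_trans,
        eqToHom_trans_assoc, eqToHom_refl, Category.id_comp, Category.comp_id]
    have claim1 : RAPL.transR f' u' ϵ'
          ((ζ ▷ Δb ≫ eqToHom E5) ≫ (q ◁ lam) ▷ u') =
        RAPL.transR f' u' ϵ' (ζ ▷ Δb ≫ eqToHom E5) ≫ q ◁ lam :=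
      RAPL.transR_natural f' u' ϵ' (ζ ▷ Δb ≫ eqToHom E5) (q ◁ lam)
    have claim2 : eqToHom h1 ≫ RAPL.transR f' u' ϵ' (ζ ▷ Δb ≫ eqToHom E5) =
        (RAPL.transR f u ϵ (ζ ≫ eqToHom a2)) ▷ Δa ≫ (α_ q r Δa).hom := by
      dsimp only [RAPL.transR]
      simp only [Strict.associator_eqToIso, Strict.leftUnitor_eqToIso,
        Strict.rightUnitor_eqToIso, eqToIso.hom, eqToIso.inv, whiskerLeft_eqToHom,
        eqToHom_whiskerRight, comp_whiskerRight, Bicategory.whiskerLeft_comp,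
        Bicategory.comp_whiskerLeft, whisker_assoc, Category.assoc, eqToHom_trans,
        eqToHom_trans_assoc, eqToHom_refl, Category.id_comp, Category.comp_id]
      rw [hco]
      rw [RAPL.swr2 ζ Δb f', RAPL.wr_congr ζ hf.symm, RAPL.swr2 ζ f Δa]
      simp only [whiskerLeft_eqToHom, eqToHom_whiskerRight, Bicategory.whiskerLeft_comp,
        Category.assoc, eqToHom_trans, eqToHom_trans_assoc, eqToHom_refl,
        Category.id_comp, Category.comp_id]
    simp only [hT]
    rw [claim0, claim1, ← Category.assoc (eqToHom h1) _ (q ◁ lam), claim2]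
    simp only [Category.assoc]
  obtain ⟨ζ', hζ'1, hζ'2⟩ := hlift y (p ≫ f) q (T χ)
  refine ⟨RAPL.transL f u η ζ' ≫ eqToHom a2.symm, ?_, ?_⟩
  · apply Tinj
    rw [key]
    rw [show (RAPL.transL f u η ζ' ≫ eqToHom a2.symm) ≫ eqToHom a2 = RAPL.transL f u η ζ' by simp]
    rw [RAPL.transR_transL _ _ _ _ hLt]
    exact hζ'1
  · intro ζ hζ
    have hT2 := congrArg T hζ
    rw [key] at hT2
    have h5 : RAPL.transR f u ϵ (ζ ≫ eqToHom a2) = ζ' := hζ'2 _ hT2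
    have h6 := congrArg (RAPL.transL f u η) h5
    rw [RAPL.transL_transR _ _ _ _ hRt] at h6
    rw [← h6]; simp
end

section
/- Right adjoints between objects admitting all limits preserve them, in the following 2-categorical form. In any bicategory, suppose given adjunctions Δa ⊣ l_a (with Δa : a ⟶ a', l_a : a' ⟶ a), Δb ⊣ l_b (with Δb : b ⟶ b', l_b : b' ⟶ b), f ⊣ u (with f : b ⟶ a, u : a ⟶ b), and f' ⊣ u' (with f' : b' ⟶ a', u' : a' ⟶ b'), together with an invertible 2-cell f ≫ Δa ≅ Δb ≫ f'. Then there is an invertible 2-cell l_a ≫ u ≅ u' ≫ l_b. -/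
open CategoryTheory

open CategoryTheory.Bicategory

namespace RightAdjAux

universe w v u

variable {B : Type u} [Bicategory.{w, v} B] {x y : B}

/-- Transport an adjunction along an isomorphism of left adjoints. -/
def adjOfIsoLeft {F G : x ⟶ y} {U : y ⟶ x} (adj : Bicategory.Adjunction F U) (i : F ≅ G) :
    Bicategory.Adjunction G U where
  unit := adj.unit ≫ i.hom ▷ U
  counit := U ◁ i.inv ≫ adj.counit
  left_triangle := by
    calc (adj.unit ≫ i.hom ▷ U) ▷ G ⊗≫ G ◁ (U ◁ i.inv ≫ adj.counit)
        = adj.unit ▷ G ⊗≫ (i.hom ▷ (U ≫ G) ≫ G ◁ (U ◁ i.inv)) ⊗≫ G ◁ adj.counit := by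
          bicategory
      _ = adj.unit ▷ G ⊗≫ F ◁ (U ◁ i.inv) ⊗≫ (i.hom ▷ (U ≫ F) ≫ G ◁ adj.counit) := by
          rw [← whisker_exchange]; bicategory
      _ = (adj.unit ▷ G ≫ (F ≫ U) ◁ i.inv) ⊗≫ F ◁ adj.counit ⊗≫ i.hom ▷ 𝟙 y := by
          rw [← whisker_exchange]; bicategory
      _ = 𝟙 x ◁ i.inv ⊗≫ leftZigzag adj.unit adj.counit ⊗≫ i.hom ▷ 𝟙 y := by
          rw [← whisker_exchange, leftZigzag]; bicategory
      _ = 𝟙 x ◁ i.inv ⊗≫ ((λ_ F).hom ≫ (ρ_ F).inv) ⊗≫ i.hom ▷ 𝟙 y := by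
          rw [adj.left_triangle]
      _ = 𝟙 x ◁ (i.inv ≫ i.hom) ≫ (λ_ G).hom ≫ (ρ_ G).inv := by
          bicategory
      _ = (λ_ G).hom ≫ (ρ_ G).inv := by
          rw [i.inv_hom_id]; simp
  right_triangle := by
    calc U ◁ (adj.unit ≫ i.hom ▷ U) ⊗≫ (U ◁ i.inv ≫ adj.counit) ▷ U
        = U ◁ adj.unit ⊗≫ U ◁ (i.hom ≫ i.inv) ▷ U ⊗≫ adj.counit ▷ U := by
          bicategory
      _ = U ◁ adj.unit ⊗≫ adj.counit ▷ U := by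
          rw [i.hom_inv_id]; bicategory
      _ = (ρ_ U).hom ≫ (λ_ U).inv := adj.right_triangle

/-- Uniqueness of right adjoints, as an invertible 2-cell. -/
noncomputable def rightAdjointUniq {G : x ⟶ y} {U V : y ⟶ x}
    (adj1 : Bicategory.Adjunction G U) (adj2 : Bicategory.Adjunction G V) : U ≅ V := by
  let e := LeftExtension.IsKan.uniqueUpToIso
    (LeftExtension.IsAbsKan.isKan adj1.isAbsoluteLeftKan)
    (LeftExtension.IsAbsKan.isKan adj2.isAbsoluteLeftKan)
  exact ⟨e.hom.right, e.inv.right,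
    by rw [← Comma.comp_right, e.hom_inv_id]; rfl,
    by rw [← Comma.comp_right, e.inv_hom_id]; rfl⟩

end RightAdjAux

/-- Right adjoints between objects admitting all limits preserve them, in the
2-categorical form: given adjunctions `Δa ⊣ la`, `Δb ⊣ lb`, `f ⊣ u`, `f' ⊣ u'`
and an invertible 2-cell `f ≫ Δa ≅ Δb ≫ f'`, there is an invertible 2-cell
`la ≫ u ≅ u' ≫ lb`. -/
theorem right_adjoint_preserves_all_limits {B : Type*} [Bicategory B] {a a' b b' : B}
    (Δa : a ⟶ a') (la : a' ⟶ a) (adja : Bicategory.Adjunction Δa la)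
    (Δb : b ⟶ b') (lb : b' ⟶ b) (adjb : Bicategory.Adjunction Δb lb)
    (f : b ⟶ a) (u : a ⟶ b) (adj : Bicategory.Adjunction f u)
    (f' : b' ⟶ a') (u' : a' ⟶ b') (adj' : Bicategory.Adjunction f' u')
    (i : f ≫ Δa ≅ Δb ≫ f') :
    Nonempty (la ≫ u ≅ u' ≫ lb) := by
  exact ⟨RightAdjAux.rightAdjointUniq (RightAdjAux.adjOfIsoLeft (adj.comp adja) i)
    (adjb.comp adj')⟩
end
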